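/- Let (fᵢ : Gᵢ → Hᵢ) be a family of group homomorphisms between two inverse sequences of countable groups (Gᵢ, pᵢ) and (Hᵢ, qᵢ), commuting with the bonding maps (fᵢ ∘ pᵢ = qᵢ ∘ fᵢ₊₁ for all i). Then (fᵢ) is a pro-isomorphism if and only if the induced maps lim fᵢ : lim Gᵢ → lim Hᵢ and lim¹ fᵢ : lim¹ Gᵢ → lim¹ Hᵢ (the latter sending the class of (g₀,g₁,…) to the class of (f₀(g₀),f₁(g₁),…)) are both bijections. Here (fᵢ) is called a pro-isomorphism if there exist a strictly increasing function k : ℕ → ℕ and group homomorphisms gᵢ : H_{k(i+1)} → G_{k(i)} such that gᵢ ∘ f_{k(i+1)} : G_{k(i+1)} → G_{k(i)} and f_{k(i)} ∘ gᵢ : H_{k(i+1)} → H_{k(i)} equal the respective composite bonding maps. -/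

import Mathlib

/-- An inverse sequence of groups `⋯ → G₂ → G₁ → G₀`, presented by its compatible
composite bonding homomorphisms `bond h : G j →* G i` for `i ≤ j`; the one-step
bonding maps `pᵢ` are `bond (Nat.le_succ i) : G (i+1) →* G i`. -/
structure GroupInvSeq (G : ℕ → Type) [∀ i, Group (G i)] : Type where
  bond : ∀ ⦃i j : ℕ⦄, i ≤ j → (G j →* G i)
  bond_refl : ∀ i, bond (le_refl i) = MonoidHom.id (G i)
  bond_comp : ∀ ⦃i j k : ℕ⦄ (hij : i ≤ j) (hjk : j ≤ k),
    (bond hij).comp (bond hjk) = bond (hij.trans hjk)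

namespace GroupInvSeq

variable {G H : ℕ → Type} [∀ i, Group (G i)] [∀ i, Group (H i)]

/-- The inverse limit of an inverse sequence of groups: the set of threads. -/
abbrev lim (S : GroupInvSeq G) : Type :=
  {g : ∀ i, G i // ∀ i, S.bond (Nat.le_succ i) (g (i + 1)) = g i}

/-- The orbit relation on `∏ᵢ Gᵢ` of the right action
`(g₀,g₁,…)·(x₀,x₁,…) = (x₀⁻¹g₀p₀(x₁), x₁⁻¹g₁p₁(x₂), …)`; its orbit set is `lim¹`. -/
def lim1Rel (S : GroupInvSeq G) (g g' : ∀ i, G i) : Prop :=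
  ∃ x : ∀ i, G i, ∀ i, g' i = (x i)⁻¹ * g i * S.bond (Nat.le_succ i) (x (i + 1))

/-- The derived limit `lim¹` of an inverse sequence of groups: the orbit set of the
action above, pointed at the class of the identity. -/
def lim1 (S : GroupInvSeq G) : Type :=
  Quot S.lim1Rel

/-- The map `lim Gᵢ → lim Hᵢ` induced by a level map of inverse sequences. -/
def limMap (S : GroupInvSeq G) (T : GroupInvSeq H) (f : ∀ i, G i →* H i)
    (hcomm : ∀ i (x : G (i + 1)),
      f i (S.bond (Nat.le_succ i) x) = T.bond (Nat.le_succ i) (f (i + 1) x)) :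
    S.lim → T.lim :=
  fun g => ⟨fun i => f i (g.1 i), fun i => by
    show T.bond (Nat.le_succ i) (f (i + 1) (g.1 (i + 1))) = f i (g.1 i)
    rw [← g.2 i, hcomm]⟩

/-- The map `lim¹ Gᵢ → lim¹ Hᵢ` induced by a level map of inverse sequences,
sending the class of `(g₀,g₁,…)` to the class of `(f₀(g₀),f₁(g₁),…)`. -/
def lim1Map (S : GroupInvSeq G) (T : GroupInvSeq H) (f : ∀ i, G i →* H i)
    (hcomm : ∀ i (x : G (i + 1)),
      f i (S.bond (Nat.le_succ i) x) = T.bond (Nat.le_succ i) (f (i + 1) x)) :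
    S.lim1 → T.lim1 :=
  Quot.lift (fun g => Quot.mk T.lim1Rel (fun i => f i (g i)))
    (fun g g' hg => by
      obtain ⟨x, hx⟩ := hg
      refine Quot.sound ⟨fun i => f i (x i), fun i => ?_⟩
      show f i (g' i) = (f i (x i))⁻¹ * f i (g i) * T.bond (Nat.le_succ i) (f (i + 1) (x (i + 1)))
      rw [hx i, map_mul, map_mul, map_inv, hcomm])

end GroupInvSeq


namespace GroupInvSeq

variable {G H : ℕ → Type} [∀ i, Group (G i)] [∀ i, Group (H i)]

section Basic

variable (A : GroupInvSeq G)

theorem bond_self {i : ℕ} (h : i ≤ i) (x : G i) : A.bond h x = x := by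
  have : A.bond h = MonoidHom.id (G i) := A.bond_refl i
  rw [this]; rfl

theorem bond_bond {i j l : ℕ} (hij : i ≤ j) (hjl : j ≤ l) (x : G l) :
    A.bond hij (A.bond hjl x) = A.bond (hij.trans hjl) x := by
  have := A.bond_comp hij hjl
  exact DFunLike.congr_fun this x

theorem lim1Rel_refl (g : ∀ i, G i) : A.lim1Rel g g :=
  ⟨fun _ => 1, fun i => by simp⟩

theorem lim1Rel_symm {g g' : ∀ i, G i} (h : A.lim1Rel g g') : A.lim1Rel g' g := by
  obtain ⟨x, hx⟩ := h
  refine ⟨fun i => (x i)⁻¹, fun i => ?_⟩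
  rw [hx i]; simp [map_inv]; group

theorem lim1Rel_trans {g g' g'' : ∀ i, G i} (h : A.lim1Rel g g') (h' : A.lim1Rel g' g'') :
    A.lim1Rel g g'' := by
  obtain ⟨x, hx⟩ := h; obtain ⟨y, hy⟩ := h'
  refine ⟨fun i => x i * y i, fun i => ?_⟩
  rw [hy i, hx i]; simp [map_mul]; group

theorem lim1Rel_equivalence : Equivalence A.lim1Rel :=
  ⟨A.lim1Rel_refl, A.lim1Rel_symm, A.lim1Rel_trans⟩

theorem lim1_mk_eq {g g' : ∀ i, G i} :
    Quot.mk A.lim1Rel g = Quot.mk A.lim1Rel g' ↔ A.lim1Rel g g' := by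
  rw [Quot.eq]
  exact (A.lim1Rel_equivalence).eqvGen_iff

/-- A thread is determined along bonds. -/
theorem lim_bond (g : A.lim) {i j : ℕ} (h : i ≤ j) : A.bond h (g.1 j) = g.1 i := by
  induction j, h using Nat.le_induction with
  | base => exact A.bond_self _ _
  | succ j hij ih =>
      have : A.bond (Nat.le_succ j) (g.1 (j+1)) = g.1 j := g.2 j
      rw [← A.bond_bond hij (Nat.le_succ j), this, ih]

end Basic

section Map

variable (S : GroupInvSeq G) (T : GroupInvSeq H) (f : ∀ i, G i →* H i)
  (hcomm : ∀ i (x : G (i + 1)),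
      f i (S.bond (Nat.le_succ i) x) = T.bond (Nat.le_succ i) (f (i + 1) x))

include hcomm in
theorem map_bond {i j : ℕ} (h : i ≤ j) (x : G j) :
    f i (S.bond h x) = T.bond h (f j x) := by
  induction j, h using Nat.le_induction with
  | base => rw [S.bond_self, T.bond_self]
  | succ j hij ih =>
      rw [← S.bond_bond hij (Nat.le_succ j), ih, hcomm, T.bond_bond]

end Map

section PP

variable (A : GroupInvSeq G)

/-- Partial product `g a * bond (g (a+1)) * ⋯ * bond (g (b-1))` in `G a`. -/
def pp (g : ∀ i, G i) (a : ℕ) : ℕ → G a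
  | 0 => 1
  | b + 1 => if h : a ≤ b then pp g a b * A.bond h (g b) else 1

theorem pp_zero (g : ∀ i, G i) (a : ℕ) : A.pp g a 0 = 1 := rfl

theorem pp_succ (g : ∀ i, G i) {a b : ℕ} (h : a ≤ b) :
    A.pp g a (b + 1) = A.pp g a b * A.bond h (g b) := by
  rw [pp, dif_pos h]

theorem pp_of_lt (g : ∀ i, G i) {a b : ℕ} (h : b ≤ a) : A.pp g a b = 1 := by
  cases b with
  | zero => rfl
  | succ b => rw [pp, dif_neg (by omega)]

theorem pp_self (g : ∀ i, G i) (a : ℕ) : A.pp g a a = 1 := A.pp_of_lt g le_rfl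

theorem pp_succ_self (g : ∀ i, G i) (a : ℕ) : A.pp g a (a + 1) = g a := by
  rw [A.pp_succ g (le_refl a), A.pp_self, one_mul, A.bond_self]

theorem pp_congr {g g' : ∀ i, G i} {a : ℕ} (b : ℕ)
    (hag : ∀ i, a ≤ i → i < b → g i = g' i) : A.pp g a b = A.pp g' a b := by
  induction b with
  | zero => rfl
  | succ b ih =>
      by_cases h : a ≤ b
      · rw [A.pp_succ g h, A.pp_succ g' h, ih (fun i h1 h2 => hag i h1 (by omega)),
          hag b h (by omega)]
      · rw [pp, dif_neg h, pp, dif_neg h]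

theorem pp_split (g : ∀ i, G i) {a b c : ℕ} (hab : a ≤ b) (hbc : b ≤ c) :
    A.pp g a c = A.pp g a b * A.bond hab (A.pp g b c) := by
  induction c, hbc using Nat.le_induction with
  | base => rw [A.pp_self, map_one, mul_one]
  | succ c hbc ih =>
      rw [A.pp_succ g (hab.trans hbc), A.pp_succ g hbc, ih, map_mul, mul_assoc,
        A.bond_bond]

theorem pp_eq_one (g : ∀ i, G i) {a b : ℕ} (h1 : ∀ i, a ≤ i → i < b → g i = 1) :
    A.pp g a b = 1 := by
  induction b with
  | zero => rfl
  | succ b ih =>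
      by_cases h : a ≤ b
      · rw [A.pp_succ _ h, ih (fun i hi hi' => h1 i hi (by omega)), h1 b h (by omega),
          map_one, one_mul]
      · rw [pp, dif_neg h]

theorem pp_isolated (g : ∀ i, G i) {b c : ℕ} (hbc : b < c)
    (h1 : ∀ l, b < l → l < c → g l = 1) : A.pp g b c = g b := by
  rw [A.pp_split g (Nat.le_succ b) hbc, pp_succ_self, A.pp_eq_one g (fun i hi hi' => h1 i hi hi'),
    map_one, mul_one]

/-- Telescoping: the effect of the `lim¹` action on partial products. -/
theorem pp_telescope {g g' x : ∀ i, G i}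
    (hrel : ∀ i, g' i = (x i)⁻¹ * g i * A.bond (Nat.le_succ i) (x (i + 1)))
    {a b : ℕ} (h : a ≤ b) :
    A.pp g' a b = (x a)⁻¹ * A.pp g a b * A.bond h (x b) := by
  induction b, h using Nat.le_induction with
  | base => rw [A.pp_self, A.pp_self, A.bond_self]; group
  | succ b hab ih =>
      rw [A.pp_succ g' hab, A.pp_succ g hab, ih, hrel b, map_mul, map_mul, map_inv,
        A.bond_bond]
      group

theorem pp_mem (M : ∀ i, Subgroup (G i))
    (hM : ∀ ⦃i j : ℕ⦄ (h : i ≤ j) (x : G j), x ∈ M j → A.bond h x ∈ M i)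
    {g : ∀ i, G i} (hg : ∀ i, g i ∈ M i) (a b : ℕ) : A.pp g a b ∈ M a := by
  induction b with
  | zero => exact one_mem _
  | succ b ih =>
      by_cases h : a ≤ b
      · rw [A.pp_succ _ h]; exact mul_mem ih (hM h _ (hg b))
      · rw [pp, dif_neg h]; exact one_mem _

theorem pp_map (S : GroupInvSeq G) (T : GroupInvSeq H) (f : ∀ i, G i →* H i)
    (hcomm : ∀ i (x : G (i + 1)),
      f i (S.bond (Nat.le_succ i) x) = T.bond (Nat.le_succ i) (f (i + 1) x))
    (g : ∀ i, G i) (a b : ℕ) :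
    f a (S.pp g a b) = T.pp (fun i => f i (g i)) a b := by
  induction b with
  | zero => exact map_one _
  | succ b ih =>
      by_cases h : a ≤ b
      · rw [S.pp_succ _ h, T.pp_succ _ h, map_mul, ih, map_bond S T f hcomm _ _]
      · rw [pp, dif_neg h, pp, dif_neg h, map_one]

end PP

section Reindex

variable (A : GroupInvSeq G) {k : ℕ → ℕ}

/-- The reindexed (subsequence) tower. -/
def reindex (hk : StrictMono k) : GroupInvSeq (fun i => G (k i)) where
  bond _ _ hij := A.bond (hk.monotone hij)
  bond_refl i := A.bond_refl (k i)
  bond_comp _ _ _ hij hjk := A.bond_comp (hk.monotone hij) (hk.monotone hjk)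

/-- Least `i` with `j ≤ k i`. -/
def nidx (hk : StrictMono k) (j : ℕ) : ℕ :=
  Nat.find (⟨j, hk.le_apply⟩ : ∃ i, j ≤ k i)

theorem le_k_nidx (hk : StrictMono k) (j : ℕ) : j ≤ k (nidx hk j) :=
  Nat.find_spec (⟨j, hk.le_apply⟩ : ∃ i, j ≤ k i)

theorem nidx_min (hk : StrictMono k) {j i : ℕ} (h : j ≤ k i) : nidx hk j ≤ i :=
  Nat.find_min' _ h

theorem nidx_k (hk : StrictMono k) (i : ℕ) : nidx hk (k i) = i := by
  have h1 : nidx hk (k i) ≤ i := nidx_min hk le_rfl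
  have h2 := le_k_nidx hk (k i)
  have := hk.le_iff_le.mp h2
  omega

theorem nidx_k_succ (hk : StrictMono k) (i : ℕ) : nidx hk (k i + 1) = i + 1 := by
  have h1 : nidx hk (k i + 1) ≤ i + 1 := nidx_min hk (hk (by omega))
  have h2 := le_k_nidx hk (k i + 1)
  have h3 : i < nidx hk (k i + 1) := by
    by_contra hc
    have := hk.monotone (by omega : nidx hk (k i + 1) ≤ i)
    omega
  omega

theorem nidx_succ_of_not_mem (hk : StrictMono k) {j : ℕ} (h : ¬∃ i, k i = j) :
    nidx hk (j + 1) = nidx hk j := by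
  have h2 := le_k_nidx hk j
  have h3 : j ≠ k (nidx hk j) := fun hc => h ⟨_, hc.symm⟩
  have h4 : nidx hk (j + 1) ≤ nidx hk j := nidx_min hk (by omega)
  have h5 : nidx hk j ≤ nidx hk (j + 1) := nidx_min hk (le_trans (by omega) (le_k_nidx hk (j+1)))
  omega

theorem lt_k_nidx_of_not_mem (hk : StrictMono k) {j : ℕ} (h : ¬∃ i, k i = j) :
    j < k (nidx hk j) := by
  have h2 := le_k_nidx hk j
  have h3 : j ≠ k (nidx hk j) := fun hc => h ⟨_, hc.symm⟩
  omega

/-- Transport a bond applied to a dependent value along an index equality. -/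
theorem bond_apply_congr (y : ∀ i, G (k i)) {j n m : ℕ} (e : n = m) (h1 : j ≤ k n)
    (h2 : j ≤ k m) : A.bond h1 (y n) = A.bond h2 (y m) := by subst e; rfl

open scoped Classical in
/-- Spread a subsequence-indexed family into a fully indexed one, filling with `1`. -/
noncomputable def spread (c : ∀ i, G (k i)) (j : ℕ) : G j :=
  if h : ∃ i, k i = j then h.choose_spec ▸ c h.choose else 1

theorem spread_k (hk : StrictMono k) (c : ∀ i, G (k i)) (i : ℕ) :
    spread c (k i) = c i := by
  have h : ∃ i', k i' = k i := ⟨i, rfl⟩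
  rw [spread, dif_pos h]
  have hic : h.choose = i := hk.injective h.choose_spec
  have gen : ∀ (a : ℕ) (e : k a = k i), a = i → (e ▸ c a : G (k i)) = c i := by
    intro a e ha; subst ha; rfl
  exact gen h.choose h.choose_spec hic

theorem spread_not_mem (c : ∀ i, G (k i)) {j : ℕ} (h : ¬∃ i, k i = j) :
    spread c j = 1 := by rw [spread, dif_neg h]

/-- Block partial products along the subsequence. -/
def phiRep (g : ∀ j, G j) (i : ℕ) : G (k i) := A.pp g (k i) (k (i + 1))

theorem phiRep_rel (hk : StrictMono k) {g g' : ∀ j, G j} (h : A.lim1Rel g g') :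
    (A.reindex hk).lim1Rel (A.phiRep g) (A.phiRep g') := by
  obtain ⟨x, hx⟩ := h
  refine ⟨fun i => x (k i), fun i => ?_⟩
  exact A.pp_telescope hx (hk.monotone (Nat.le_succ i))

theorem spread_rel (hk : StrictMono k) {c c' : ∀ i, G (k i)}
    (h : (A.reindex hk).lim1Rel c c') :
    A.lim1Rel (spread c) (spread c') := by
  obtain ⟨y, hy⟩ := h
  refine ⟨fun j => A.bond (le_k_nidx hk j) (y (nidx hk j)), fun j => ?_⟩
  beta_reduce
  by_cases hj : ∃ i, k i = j
  · obtain ⟨i, rfl⟩ := hj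
    rw [spread_k hk c' i, spread_k hk c i, hy i,
      A.bond_apply_congr y (nidx_k hk i) (le_k_nidx hk (k i)) (le_refl (k i)),
      A.bond_apply_congr y (nidx_k_succ hk i) (le_k_nidx hk (k i + 1))
        ((hk (Nat.lt_succ_self i)) : k i + 1 ≤ k (i+1)),
      A.bond_self, A.bond_bond]
    rfl
  · rw [spread_not_mem c hj, spread_not_mem c' hj, A.bond_bond,
      A.bond_apply_congr y (nidx_succ_of_not_mem hk hj) _ (le_k_nidx hk j),
      mul_one, inv_mul_cancel]

theorem spread_phiRep_rel (hk : StrictMono k) (g : ∀ j, G j) :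
    A.lim1Rel g (spread (k := k) (A.phiRep g)) := by
  refine ⟨fun j => A.pp g j (k (nidx hk j)), fun j => ?_⟩
  by_cases hj : ∃ i, k i = j
  · obtain ⟨i, rfl⟩ := hj
    rw [spread_k hk _ i]
    simp only [phiRep, nidx_k hk, nidx_k_succ hk]
    rw [A.pp_self, inv_one, one_mul,
      A.pp_split g (Nat.le_succ (k i)) ((hk (Nat.lt_succ_self i)) : k i + 1 ≤ k (i+1)),
      A.pp_succ_self]
  · rw [spread_not_mem _ hj]
    simp only [nidx_succ_of_not_mem hk hj]
    rw [A.pp_split g (Nat.le_succ j) (lt_k_nidx_of_not_mem hk hj), A.pp_succ_self]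
    group

theorem phiRep_spread (hk : StrictMono k) (c : ∀ i, G (k i)) :
    A.phiRep (spread c) = c := by
  funext i
  have hone : ∀ l, k i < l → l < k (i + 1) → spread (k := k) c l = 1 := by
    intro l h1 h2
    refine spread_not_mem _ (fun hc => ?_)
    obtain ⟨i', rfl⟩ := hc
    have a1 : i < i' := hk.lt_iff_lt.mp h1
    have a2 : i' < i + 1 := hk.lt_iff_lt.mp h2
    omega
  calc A.phiRep (spread c) i = spread (k := k) c (k i) :=
        A.pp_isolated _ (hk (Nat.lt_succ_self i)) hone
    _ = c i := spread_k hk c i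

theorem shift_rel (hk : StrictMono k) (c : ∀ i, G (k i)) :
    (A.reindex hk).lim1Rel c (fun i => (A.reindex hk).bond (Nat.le_succ i) (c (i + 1))) :=
  ⟨c, fun i => by group⟩

theorem spread_map {H : ℕ → Type} [∀ i, Group (H i)] (hk : StrictMono k)
    (f : ∀ i, G i →* H i) (d : ∀ i, G (k i)) :
    (fun j => f j (spread d j)) = spread (fun i => f (k i) (d i)) := by
  funext j
  by_cases hj : ∃ i, k i = j
  · obtain ⟨i, rfl⟩ := hj
    rw [spread_k hk d i, spread_k hk _ i]
  · rw [spread_not_mem _ hj, spread_not_mem _ hj, map_one]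

end Reindex

section Forward

variable (S : GroupInvSeq G) (T : GroupInvSeq H) (f : ∀ i, G i →* H i)
  (hcomm : ∀ i (x : G (i + 1)),
      f i (S.bond (Nat.le_succ i) x) = T.bond (Nat.le_succ i) (f (i + 1) x))
  {k : ℕ → ℕ} (hk : StrictMono k) (g : ∀ i, H (k (i + 1)) →* G (k i))
  (hgf : ∀ i, (g i).comp (f (k (i + 1))) = S.bond (hk.monotone (Nat.le_succ i)))
  (hfg : ∀ i, (f (k i)).comp (g i) = T.bond (hk.monotone (Nat.le_succ i)))

section LimFwd

include hgf in
theorem fwd_lim_injective (hcomm' : ∀ i (x : G (i + 1)),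
      f i (S.bond (Nat.le_succ i) x) = T.bond (Nat.le_succ i) (f (i + 1) x)) :
    Function.Injective (limMap S T f hcomm') := by
  intro a b hab
  have hcomp : ∀ i, f i (a.1 i) = f i (b.1 i) := fun i =>
    congrFun (congrArg Subtype.val hab) i
  have hk0 : ∀ i, a.1 (k i) = b.1 (k i) := by
    intro i
    have h1 := DFunLike.congr_fun (hgf i) (a.1 (k (i+1)))
    have h2 := DFunLike.congr_fun (hgf i) (b.1 (k (i+1)))
    simp only [MonoidHom.comp_apply] at h1 h2
    rw [← S.lim_bond a (hk.monotone (Nat.le_succ i)), ← S.lim_bond b (hk.monotone (Nat.le_succ i)),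
      ← h1, ← h2, hcomp]
  apply Subtype.ext
  funext j
  rw [← S.lim_bond a (hk.le_apply : j ≤ k j), ← S.lim_bond b (hk.le_apply : j ≤ k j), hk0 j]

include hgf hfg in
theorem fwd_lim_surjective (hcomm' : ∀ i (x : G (i + 1)),
      f i (S.bond (Nat.le_succ i) x) = T.bond (Nat.le_succ i) (f (i + 1) x)) :
    Function.Surjective (limMap S T f hcomm') := by
  intro h
  set d : ∀ i, G (k i) := fun i => g i (h.1 (k (i+1))) with hd
  have claim1 : ∀ i, S.bond (hk.monotone (Nat.le_succ i)) (d (i+1)) = d i := by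
    intro i
    have h1 := DFunLike.congr_fun (hgf i) (g (i+1) (h.1 (k (i+2))))
    have h2 := DFunLike.congr_fun (hfg (i+1)) (h.1 (k (i+2)))
    simp only [MonoidHom.comp_apply] at h1 h2
    rw [hd]
    beta_reduce
    rw [← h1, h2, T.lim_bond h (hk.monotone (Nat.le_succ (i+1)))]
  refine ⟨⟨fun j => S.bond (hk.le_apply : j ≤ k j) (d j), fun j => ?_⟩, ?_⟩
  · rw [S.bond_bond, ← S.bond_bond (hk.le_apply : j ≤ k j) (hk.monotone (Nat.le_succ j)),
      claim1 j]
  · apply Subtype.ext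
    funext j
    show f j (S.bond _ (d j)) = h.1 j
    rw [map_bond S T f hcomm' _ (d j)]
    have h2 := DFunLike.congr_fun (hfg j) (h.1 (k (j+1)))
    simp only [MonoidHom.comp_apply] at h2
    rw [hd]
    beta_reduce
    rw [h2, T.bond_bond, T.lim_bond h]

end LimFwd

section Lim1Fwd

include hgf hfg in
theorem gshift_rel {c c' : ∀ i, H (k i)} (h : (T.reindex hk).lim1Rel c c') :
    (S.reindex hk).lim1Rel (fun i => g i (c (i+1))) (fun i => g i (c' (i+1))) := by
  obtain ⟨y, hy⟩ := h
  refine ⟨fun i => g i (y (i+1)), fun i => ?_⟩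
  beta_reduce
  rw [hy (i+1)]
  have key : g i ((T.reindex hk).bond (Nat.le_succ (i+1)) (y (i+2)))
      = (S.reindex hk).bond (Nat.le_succ i) (g (i+1) (y (i+2))) := by
    have h1 := DFunLike.congr_fun (hgf i) (g (i+1) (y (i+2)))
    have h2 := DFunLike.congr_fun (hfg (i+1)) (y (i+2))
    simp only [MonoidHom.comp_apply] at h1 h2
    show g i (T.bond _ (y (i+2))) = S.bond _ (g (i+1) (y (i+2)))
    rw [← h2, h1]
  rw [← key, map_mul, map_mul, map_inv]

end Lim1Fwd

section Lim1Fwd2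

variable (S : GroupInvSeq G) (T : GroupInvSeq H) {k : ℕ → ℕ}

/-- The representative-level inverse of `lim1Map` coming from an interleaving. -/
noncomputable def ghatRep (g : ∀ i, H (k (i + 1)) →* G (k i)) (h : ∀ i, H i) : S.lim1 :=
  Quot.mk _ (spread (k := k) (fun i => g i (T.phiRep h (i+1))))

theorem ghatRep_wd (f : ∀ i, G i →* H i) (hk : StrictMono k)
    (g : ∀ i, H (k (i + 1)) →* G (k i))
    (hgf : ∀ i, (g i).comp (f (k (i + 1))) = S.bond (hk.monotone (Nat.le_succ i)))
    (hfg : ∀ i, (f (k i)).comp (g i) = T.bond (hk.monotone (Nat.le_succ i)))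
    {h h' : ∀ i, H i} (hrel : T.lim1Rel h h') :
    ghatRep S T g h = ghatRep S T g h' := by
  apply Quot.sound
  exact S.spread_rel hk (gshift_rel S T f hk g hgf hfg (T.phiRep_rel hk hrel))

/-- The inverse of `lim1Map` coming from an interleaving. -/
noncomputable def ghat (f : ∀ i, G i →* H i) (hk : StrictMono k)
    (g : ∀ i, H (k (i + 1)) →* G (k i))
    (hgf : ∀ i, (g i).comp (f (k (i + 1))) = S.bond (hk.monotone (Nat.le_succ i)))
    (hfg : ∀ i, (f (k i)).comp (g i) = T.bond (hk.monotone (Nat.le_succ i))) :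
    T.lim1 → S.lim1 :=
  Quot.lift (ghatRep S T g) (fun _ _ hrel => ghatRep_wd S T f hk g hgf hfg hrel)

theorem ghat_left (f : ∀ i, G i →* H i) (hk : StrictMono k)
    (g : ∀ i, H (k (i + 1)) →* G (k i))
    (hgf : ∀ i, (g i).comp (f (k (i + 1))) = S.bond (hk.monotone (Nat.le_succ i)))
    (hfg : ∀ i, (f (k i)).comp (g i) = T.bond (hk.monotone (Nat.le_succ i)))
    (hcomm' : ∀ i (x : G (i + 1)),
      f i (S.bond (Nat.le_succ i) x) = T.bond (Nat.le_succ i) (f (i + 1) x))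
    (x : S.lim1) : ghat S T f hk g hgf hfg (lim1Map S T f hcomm' x) = x := by
  induction x using Quot.ind with
  | mk a =>
  show ghatRep S T g (fun i => f i (a i)) = Quot.mk _ a
  rw [ghatRep]
  apply S.lim1_mk_eq.mpr
  set e : ∀ i, G (k i) := S.phiRep a with he
  have hde : (fun i => g i (T.phiRep (fun j => f j (a j)) (i+1)))
      = fun i => (S.reindex hk).bond (Nat.le_succ i) (e (i+1)) := by
    funext i
    have hpm : T.phiRep (fun j => f j (a j)) (i+1) = f (k (i+1)) (e (i+1)) := by
      rw [he]
      rw [phiRep, phiRep, pp_map S T f hcomm']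
    rw [hpm]
    have h1 := DFunLike.congr_fun (hgf i) (e (i+1))
    simp only [MonoidHom.comp_apply] at h1
    exact h1
  rw [hde]
  exact S.lim1Rel_symm (S.lim1Rel_trans (S.spread_phiRep_rel hk a)
    (S.spread_rel hk (S.shift_rel hk e)))

theorem ghat_right (f : ∀ i, G i →* H i) (hk : StrictMono k)
    (g : ∀ i, H (k (i + 1)) →* G (k i))
    (hgf : ∀ i, (g i).comp (f (k (i + 1))) = S.bond (hk.monotone (Nat.le_succ i)))
    (hfg : ∀ i, (f (k i)).comp (g i) = T.bond (hk.monotone (Nat.le_succ i)))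
    (hcomm' : ∀ i (x : G (i + 1)),
      f i (S.bond (Nat.le_succ i) x) = T.bond (Nat.le_succ i) (f (i + 1) x))
    (y : T.lim1) : lim1Map S T f hcomm' (ghat S T f hk g hgf hfg y) = y := by
  induction y using Quot.ind with
  | mk h =>
  show Quot.mk _ (fun j => f j (spread (k := k) (fun i => g i (T.phiRep h (i+1))) j))
      = Quot.mk _ h
  rw [spread_map hk f, T.lim1_mk_eq]
  set c : ∀ i, H (k i) := T.phiRep h with hc
  have hshift : (fun i => f (k i) (g i (c (i+1))))
      = fun i => (T.reindex hk).bond (Nat.le_succ i) (c (i+1)) := by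
    funext i
    have h2 := DFunLike.congr_fun (hfg i) (c (i+1))
    simp only [MonoidHom.comp_apply] at h2
    exact h2
  rw [hshift]
  exact T.lim1Rel_symm (T.lim1Rel_trans (T.spread_phiRep_rel hk h)
    (T.spread_rel hk (T.shift_rel hk c)))

end Lim1Fwd2


include hgf hfg in
theorem forward_direction :
    Function.Bijective (limMap S T f hcomm) ∧ Function.Bijective (lim1Map S T f hcomm) := by
  refine ⟨⟨fwd_lim_injective S T f hk g hgf hcomm,
      fwd_lim_surjective S T f hk g hgf hfg hcomm⟩, ?_, ?_⟩
  · intro x y hxy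
    rw [← ghat_left S T f hk g hgf hfg hcomm x, ← ghat_left S T f hk g hgf hfg hcomm y, hxy]
  · intro y
    exact ⟨ghat S T f hk g hgf hfg y, ghat_right S T f hk g hgf hfg hcomm y⟩

end Forward


section Thread

variable (A : GroupInvSeq G)

/-- Build a thread-with-corrections upwards from a starting point. -/
theorem threadM (M : ∀ i, Subgroup (G i))
    (hM : ∀ ⦃i j : ℕ⦄ (h : i ≤ j) (x : G j), x ∈ M j → A.bond h x ∈ M i)
    (P : ∀ i, G i → Prop)
    (hstep : ∀ m (v : G m), P m v → ∃ v' : G (m + 1), P (m + 1) v' ∧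
      ∃ mu ∈ M m, A.bond (Nat.le_succ m) v' = mu * v)
    (m₀ : ℕ) (z₀ : G m₀) (hz₀ : P m₀ z₀) :
    ∃ (h : ∀ j, G j) (μ : ∀ j, G j), (∀ j, μ j ∈ M j) ∧
      (∀ j, A.bond (Nat.le_succ j) (h (j + 1)) = μ j * h j) ∧
      ∃ mz ∈ M m₀, h m₀ = mz * z₀ := by
  classical
  let W : ∀ r : ℕ, {v : G (m₀ + r) // P (m₀ + r) v} := fun r =>
    Nat.rec ⟨z₀, hz₀⟩ (fun r w =>
      ⟨(hstep (m₀ + r) w.1 w.2).choose, (hstep (m₀ + r) w.1 w.2).choose_spec.1⟩) r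
  have hlink : ∀ r, ∃ mu ∈ M (m₀ + r),
      A.bond (Nat.le_succ (m₀ + r)) (W (r + 1)).1 = mu * (W r).1 := fun r =>
    (hstep (m₀ + r) (W r).1 (W r).2).choose_spec.2
  have hdown : ∀ r, ∃ mz ∈ M m₀, A.bond (Nat.le_add_right m₀ r) (W r).1 = mz * z₀ := by
    intro r
    induction r with
    | zero => exact ⟨1, one_mem _, by rw [one_mul]; exact A.bond_self _ _⟩
    | succ r ih =>
        obtain ⟨mz, hmz, hmzeq⟩ := ih
        obtain ⟨mu, hmu, hmueq⟩ := hlink r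
        refine ⟨A.bond (Nat.le_add_right m₀ r) mu * mz, mul_mem (hM _ _ hmu) hmz, ?_⟩
        calc A.bond (Nat.le_add_right m₀ (r + 1)) (W (r + 1)).1
            = A.bond (Nat.le_add_right m₀ r) (A.bond (Nat.le_succ (m₀ + r)) (W (r + 1)).1) :=
              (A.bond_bond _ _ _).symm
          _ = A.bond (Nat.le_add_right m₀ r) (mu * (W r).1) := by rw [hmueq]
          _ = A.bond (Nat.le_add_right m₀ r) mu * mz * z₀ := by
              rw [map_mul, hmzeq, mul_assoc]
  refine ⟨fun j => A.bond (Nat.le_add_left j m₀) (W j).1,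
    fun j => A.bond (Nat.le_add_left j m₀) ((hlink j).choose), fun j => hM _ _ (hlink j).choose_spec.1,
    fun j => ?_, ?_⟩
  · have h1 := (hlink j).choose_spec.2
    calc A.bond (Nat.le_succ j) (A.bond (Nat.le_add_left (j + 1) m₀) (W (j + 1)).1)
        = A.bond ((Nat.le_add_left j m₀).trans (Nat.le_succ (m₀ + j))) (W (j + 1)).1 :=
          A.bond_bond _ _ _
      _ = A.bond (Nat.le_add_left j m₀) (A.bond (Nat.le_succ (m₀ + j)) (W (j + 1)).1) :=
          (A.bond_bond _ _ _).symm
      _ = A.bond (Nat.le_add_left j m₀) ((hlink j).choose * (W j).1) :=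
          congrArg (⇑(A.bond (Nat.le_add_left j m₀))) h1
      _ = _ := map_mul _ _ _
  · obtain ⟨mz, hmz, hmzeq⟩ := hdown m₀
    exact ⟨mz, hmz, by rw [← hmzeq]⟩

/-- Build an honest thread upwards from a starting point. -/
theorem threadBot (P : ∀ i, G i → Prop)
    (hstep : ∀ m (v : G m), P m v → ∃ v' : G (m + 1), P (m + 1) v' ∧
      A.bond (Nat.le_succ m) v' = v)
    (m₀ : ℕ) (z₀ : G m₀) (hz₀ : P m₀ z₀) :
    ∃ a : A.lim, a.1 m₀ = z₀ := by
  obtain ⟨h, μ, hμmem, hthr, mz, hmz, hm₀⟩ := A.threadM (fun _ => ⊥) (fun i j h x hx => by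
      simp only [Subgroup.mem_bot] at hx ⊢; rw [hx, map_one]) P
    (fun m v hv => by
      obtain ⟨v', hv', heq⟩ := hstep m v hv
      exact ⟨v', hv', 1, one_mem _, by rw [one_mul, heq]⟩) m₀ z₀ hz₀
  simp only [Subgroup.mem_bot] at hμmem hmz
  subst hmz
  refine ⟨⟨h, fun j => ?_⟩, by show h m₀ = z₀; rw [hm₀, one_mul]⟩
  rw [hthr j, hμmem j, one_mul]

end Thread

section Diagonal

variable (A : GroupInvSeq G)

/-- The diagonal (relative Mittag-Leffler) lemma: if every sequence is `lim¹`-equivalent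
to one with entries in a bond-stable family of subgroups `M`, then the double-coset
images `M m₀ · im (bond : G j → G m₀)` stabilize. -/
theorem step1 [∀ i, Countable (G i)] (M : ∀ i, Subgroup (G i))
    (hM : ∀ ⦃i j : ℕ⦄ (h : i ≤ j) (x : G j), x ∈ M j → A.bond h x ∈ M i)
    (HYP : ∀ h : ∀ i, G i, ∃ (h' x : ∀ i, G i), (∀ i, h' i ∈ M i) ∧
        ∀ i, h' i = (x i)⁻¹ * h i * A.bond (Nat.le_succ i) (x (i + 1)))
    (m₀ : ℕ) :
    ∃ (j₀ : ℕ) (h₀ : m₀ ≤ j₀), ∀ (j : ℕ) (hj : j₀ ≤ j) (z' : G j₀), ∃ mm ∈ M m₀, ∃ z : G j,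
      A.bond h₀ z' = mm * A.bond (h₀.trans hj) z := by
  classical
  by_contra hcon
  push_neg at hcon
  -- the decreasing family of double cosets
  set D : ℕ → Set (G m₀) := fun j => {u | ∃ mm ∈ M m₀, ∃ z : G j, ∃ h : m₀ ≤ j,
    u = mm * A.bond h z} with hD
  have hDmono : ∀ {j j' : ℕ}, m₀ ≤ j → j ≤ j' → D j' ⊆ D j := by
    intro j j' h1 h2 u hu
    obtain ⟨mm, hmm, z, h, rfl⟩ := hu
    exact ⟨mm, hmm, A.bond h2 z, h1, by rw [A.bond_bond]⟩
  have hNS : ∀ (j₀ : ℕ), m₀ ≤ j₀ → ∃ j, j₀ ≤ j ∧ ∃ u, u ∈ D j₀ ∧ u ∉ D j := by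
    intro j₀ h₀
    obtain ⟨j, hj, z', hz'⟩ := hcon j₀ h₀
    refine ⟨j, hj, A.bond h₀ z', ⟨1, one_mem _, z', h₀, by rw [one_mul]⟩, ?_⟩
    rintro ⟨mm, hmm, z, h, heq⟩
    exact hz' mm hmm z heq
  obtain ⟨y, hy⟩ := exists_surjective_nat (G m₀)
  -- the key extension step
  have CLAIM : ∀ (jn : ℕ) (hjn : m₀ ≤ jn) (v t : G m₀), ∃ (w : G jn) (js : ℕ),
      jn < js ∧ t⁻¹ * (v * A.bond hjn w) ∉ D js := by
    intro jn hjn v t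
    by_contra hc
    push_neg at hc
    set u := t⁻¹ * v with hu
    have stepa : ∀ j, jn ≤ j → ∀ w : G jn, u * A.bond hjn w ∈ D j := by
      intro j hj w
      have h1 := hc w (max j (jn + 1)) (by omega)
      have h2 : t⁻¹ * (v * A.bond hjn w) = u * A.bond hjn w := by rw [hu, mul_assoc]
      rw [h2] at h1
      exact hDmono (hjn.trans hj) (le_max_left _ _) h1
    have huD : ∀ j, jn ≤ j → u ∈ D j := by
      intro j hj
      have := stepa j hj 1
      rwa [map_one, mul_one] at this
    have hstab : ∀ j, jn ≤ j → D jn ⊆ D j := by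
      intro j hj d hd
      obtain ⟨mm, hmm, ζ, hζ, rfl⟩ := hd
      obtain ⟨m', hm', z', h', hu'⟩ := huD jn le_rfl
      have key : u * A.bond hjn (z'⁻¹ * ζ) = m' * A.bond hjn ζ := by
        have hz'' : A.bond h' z' = A.bond hjn z' := rfl
        rw [hu', hz'', map_mul, map_inv]
        group
      have h3 := stepa j hj (z'⁻¹ * ζ)
      rw [key] at h3
      obtain ⟨mm₃, hmm₃, z₃, h₃, heq₃⟩ := h3
      have hthis : A.bond hjn ζ = m'⁻¹ * (mm₃ * A.bond h₃ z₃) := by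
        rw [← heq₃]; group
      refine ⟨mm * (m'⁻¹ * mm₃), mul_mem hmm (mul_mem (inv_mem hm') hmm₃), z₃, h₃, ?_⟩
      have hζ'' : A.bond hζ ζ = A.bond hjn ζ := rfl
      rw [hζ'', hthis]; group
    obtain ⟨j, hj, u₀, hu₀D, hu₀nD⟩ := hNS jn hjn
    exact hu₀nD (hstab j hj hu₀D)
  -- recursive construction of the blocking sequence
  set St := {p : ℕ × (∀ i, G i) // m₀ ≤ p.1 ∧ ∀ l, p.1 ≤ l → p.2 l = 1} with hSt
  have STEP : ∀ (n : ℕ) (s : St), ∃ p : St, s.1.1 < p.1.1 ∧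
      (∀ l, l < s.1.1 → p.1.2 l = s.1.2 l) ∧
      (y n)⁻¹ * A.pp p.1.2 m₀ p.1.1 ∉ D p.1.1 := by
    intro n s
    obtain ⟨⟨jn, hv⟩, hjn, hone⟩ := s
    replace hjn : m₀ ≤ jn := hjn
    replace hone : ∀ l, jn ≤ l → hv l = 1 := hone
    obtain ⟨w, js, hlt, hblock⟩ := CLAIM jn hjn (A.pp hv m₀ jn) (y n)
    refine ⟨⟨(js, Function.update hv jn w), hjn.trans hlt.le, fun l hl => ?_⟩, hlt,
      fun l hl => ?_, ?_⟩
    · replace hl : js ≤ l := hl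
      show Function.update hv jn w l = 1
      rw [Function.update_of_ne (by omega)]
      exact hone l (by omega)
    · replace hl : l < jn := hl
      show Function.update hv jn w l = hv l
      exact Function.update_of_ne (by omega) _ _
    · show (y n)⁻¹ * A.pp (Function.update hv jn w) m₀ js ∉ D js
      have e1 : A.pp (Function.update hv jn w) m₀ js
          = A.pp hv m₀ jn * A.bond hjn w := by
        have c1 := A.pp_split (Function.update hv jn w) hjn hlt.le
        have c2 : A.pp (Function.update hv jn w) m₀ jn = A.pp hv m₀ jn :=
          A.pp_congr jn (fun i h1 h2 => Function.update_of_ne (by omega) _ _)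
        have c3 : A.pp (Function.update hv jn w) jn js = w := by
          rw [A.pp_isolated _ hlt (fun l h1 h2 => ?_), Function.update_self]
          rw [Function.update_of_ne (by omega)]
          exact hone l (by omega)
        rw [c1, c2, c3]
      rw [e1]
      exact hblock
  let st : ℕ → St := fun n =>
    Nat.rec ⟨(m₀, fun _ => 1), le_rfl, fun _ _ => rfl⟩ (fun n s => (STEP n s).choose) n
  have hstspec : ∀ n, (st n).1.1 < (st (n + 1)).1.1 ∧
      (∀ l, l < (st n).1.1 → (st (n + 1)).1.2 l = (st n).1.2 l) ∧
      (y n)⁻¹ * A.pp (st (n + 1)).1.2 m₀ (st (n + 1)).1.1 ∉ D (st (n + 1)).1.1 :=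
    fun n => (STEP n (st n)).choose_spec
  have hjmono : ∀ n m, n ≤ m → (st n).1.1 ≤ (st m).1.1 := by
    intro n m hnm
    induction m, hnm using Nat.le_induction with
    | base => exact le_rfl
    | succ m hnm ih => exact ih.trans (hstspec m).1.le
  have hagree : ∀ n m, n ≤ m → ∀ l, l < (st n).1.1 → (st m).1.2 l = (st n).1.2 l := by
    intro n m hnm
    induction m, hnm using Nat.le_induction with
    | base => exact fun l _ => rfl
    | succ m hnm ih =>
        intro l hl
        rw [(hstspec m).2.1 l (lt_of_lt_of_le hl (hjmono n m hnm)), ih l hl]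
  have hjge : ∀ n, m₀ + n ≤ (st n).1.1 := by
    intro n
    induction n with
    | zero => exact le_rfl
    | succ n ih => have := (hstspec n).1; omega
  set hInf : ∀ i, G i := fun i => (st (i + 1)).1.2 i with hinf
  have hagree2 : ∀ n l, l < (st n).1.1 → hInf l = (st n).1.2 l := by
    intro n l hl
    rcases le_total (l + 1) n with hc | hc
    · exact (hagree (l + 1) n hc l (by have := hjge (l + 1); omega)).symm
    · exact hagree n (l + 1) hc l hl
  obtain ⟨h', x, hmem, hrel⟩ := HYP hInf
  obtain ⟨n, hn⟩ := hy (x m₀)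
  have hppD : ∀ (j : ℕ) (hj : m₀ ≤ j), (x m₀)⁻¹ * A.pp hInf m₀ j ∈ D j := by
    intro j hj
    have htel := A.pp_telescope hrel hj
    refine ⟨A.pp h' m₀ j, A.pp_mem M hM hmem m₀ j, (x j)⁻¹, hj, ?_⟩
    rw [map_inv, htel]
    group
  have hfin := hppD (st (n + 1)).1.1 ((st (n + 1)).2.1)
  have : A.pp hInf m₀ (st (n + 1)).1.1 = A.pp (st (n + 1)).1.2 m₀ (st (n + 1)).1.1 :=
    A.pp_congr _ (fun i h1 h2 => hagree2 (n + 1) i h2)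
  rw [this, ← hn] at hfin
  exact (hstspec n).2.2 hfin

end Diagonal

section Backward

variable (S : GroupInvSeq G) (T : GroupInvSeq H) (f : ∀ i, G i →* H i)

/-- A small algebraic helper. -/
theorem aux_shift {Γ : Type} [Group Γ] {a x b : Γ} (h : 1 = x⁻¹ * a * b) : a = x * b⁻¹ := by
  have h2 : x * (x⁻¹ * a * b) * b⁻¹ = a := by group
  rw [← h, mul_one] at h2
  exact h2.symm

/-- The tower of kernels of a level map. -/
def kerSeq (hcomm : ∀ i (x : G (i + 1)),
      f i (S.bond (Nat.le_succ i) x) = T.bond (Nat.le_succ i) (f (i + 1) x)) :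
    GroupInvSeq (fun i => ↥((f i).ker)) where
  bond i j h := MonoidHom.codRestrict ((S.bond h).domRestrict ((f j).ker)) ((f i).ker)
    (fun x => by
      have hx : f j (x : G j) = 1 := x.2
      have := map_bond S T f hcomm h (x : G j)
      rw [MonoidHom.mem_ker, MonoidHom.domRestrict_apply, this, hx, map_one])
  bond_refl i := MonoidHom.ext (fun x => Subtype.ext (by
    show S.bond (le_refl i) (x : G i) = (x : G i)
    exact S.bond_self _ _))
  bond_comp i j l hij hjl := MonoidHom.ext (fun x => Subtype.ext (by
    show S.bond hij (S.bond hjl (x : G l)) = S.bond (hij.trans hjl) (x : G l)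
    exact S.bond_bond _ _ _))

variable (hcomm : ∀ i (x : G (i + 1)),
      f i (S.bond (Nat.le_succ i) x) = T.bond (Nat.le_succ i) (f (i + 1) x))

/-- Condition K: kernels are eventually killed by the bonding maps. -/
theorem cond_K [∀ i, Countable (G i)]
    (Linj : Function.Injective (limMap S T f hcomm))
    (Lsurj : Function.Surjective (limMap S T f hcomm))
    (L1inj : Function.Injective (lim1Map S T f hcomm)) (i₀ : ℕ) :
    ∃ (m : ℕ) (h : i₀ ≤ m), ∀ x : G m, f m x = 1 → S.bond h x = 1 := by
  classical
  set N := kerSeq S T f hcomm with hN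
  have HYP : ∀ hseq : ∀ i, ↥((f i).ker), ∃ (h' x : ∀ i, ↥((f i).ker)),
      (∀ i, h' i ∈ (⊥ : Subgroup ↥((f i).ker))) ∧
      ∀ i, h' i = (x i)⁻¹ * hseq i * N.bond (Nat.le_succ i) (x (i + 1)) := by
    intro hseq
    set a : ∀ i, G i := fun i => (hseq i : G i) with ha
    have h1 : lim1Map S T f hcomm (Quot.mk _ a) = lim1Map S T f hcomm (Quot.mk _ (fun i => 1)) := by
      show Quot.mk _ (fun i => f i (a i)) = Quot.mk _ (fun i => f i 1)
      congr 1
      funext i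
      rw [map_one]
      exact (hseq i).2
    have h2 := L1inj h1
    replace h2 := S.lim1_mk_eq.mp h2
    obtain ⟨x, hx⟩ := h2
    have hax : ∀ i, a i = x i * (S.bond (Nat.le_succ i) (x (i + 1)))⁻¹ := fun i =>
      aux_shift (hx i)
    have ht : ∀ i, T.bond (Nat.le_succ i) (f (i + 1) (x (i + 1))) = f i (x i) := by
      intro i
      have h3 : f i (a i) = 1 := (hseq i).2
      rw [hax i, map_mul, map_inv, map_bond S T f hcomm] at h3
      exact (mul_inv_eq_one.mp h3).symm
    obtain ⟨s, hs⟩ := Lsurj ⟨fun i => f i (x i), ht⟩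
    have hsi : ∀ i, f i (s.1 i) = f i (x i) := fun i => congrFun (congrArg Subtype.val hs) i
    set m : ∀ i, G i := fun i => x i * (s.1 i)⁻¹ with hm
    have hmker : ∀ i, m i ∈ (f i).ker := by
      intro i
      rw [MonoidHom.mem_ker]
      show f i (x i * (s.1 i)⁻¹) = 1
      rw [map_mul, map_inv, hsi i, mul_inv_cancel]
    have hkey : ∀ i, a i = m i * (S.bond (Nat.le_succ i) (m (i + 1)))⁻¹ := by
      intro i
      have hsbond : S.bond (Nat.le_succ i) (s.1 (i + 1)) = s.1 i := s.2 i
      show a i = x i * (s.1 i)⁻¹ * (S.bond (Nat.le_succ i) (x (i + 1) * (s.1 (i + 1))⁻¹))⁻¹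
      rw [map_mul, map_inv, hsbond, hax i]
      group
    refine ⟨fun i => 1, fun i => ⟨m i, hmker i⟩, fun i => Subgroup.mem_bot.mpr rfl,
      fun i => ?_⟩
    apply Subtype.ext
    show (1 : G i) = (m i)⁻¹ * a i * S.bond (Nat.le_succ i) (m (i + 1))
    rw [hkey i]
    group
  have hstab := step1 N (fun _ => ⊥) (fun i j h x hx => by
    rw [Subgroup.mem_bot] at hx ⊢
    rw [hx, map_one]) HYP
  choose σ hσle hσstab using hstab
  by_contra hcon
  push_neg at hcon
  set E : ∀ mm, Set (↥((f mm).ker)) := fun mm => Set.range (N.bond (hσle mm)) with hE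
  have hstep : ∀ mm (v : ↥((f mm).ker)), v ∈ E mm →
      ∃ v', v' ∈ E (mm + 1) ∧ N.bond (Nat.le_succ mm) v' = v := by
    intro mm v hv
    obtain ⟨z', rfl⟩ := hv
    obtain ⟨w1, hw1, z₂, hz₂⟩ := hσstab mm (max (σ mm) (σ (mm + 1))) (le_max_left _ _) z'
    rw [Subgroup.mem_bot.mp hw1, one_mul] at hz₂
    refine ⟨N.bond ((hσle (mm + 1)).trans (le_max_right (σ mm) (σ (mm + 1)))) z₂,
      ⟨N.bond (le_max_right (σ mm) (σ (mm + 1))) z₂, N.bond_bond _ _ _⟩, ?_⟩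
    rw [N.bond_bond]
    exact hz₂.symm
  obtain ⟨xx, hxx1, hxx2⟩ := hcon (σ i₀) (hσle i₀)
  have hz₀E : N.bond (hσle i₀) ⟨xx, (MonoidHom.mem_ker.mpr hxx1 : xx ∈ (f (σ i₀)).ker)⟩ ∈ E i₀ :=
    ⟨⟨xx, (MonoidHom.mem_ker.mpr hxx1 : xx ∈ (f (σ i₀)).ker)⟩, rfl⟩
  obtain ⟨athread, hath⟩ := N.threadBot (fun mm v => v ∈ E mm) hstep i₀
    (N.bond (hσle i₀) ⟨xx, (MonoidHom.mem_ker.mpr hxx1 : xx ∈ (f (σ i₀)).ker)⟩) hz₀E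
  have hb1 : limMap S T f hcomm ⟨fun j => (athread.1 j : G j),
      fun j => congrArg Subtype.val (athread.2 j)⟩
      = limMap S T f hcomm ⟨fun i => 1, fun i => map_one _⟩ := by
    apply Subtype.ext
    funext j
    show f j (athread.1 j : G j) = f j 1
    rw [map_one]
    exact (athread.1 j).2
  have hb2 := Linj hb1
  have hval : (athread.1 i₀ : G i₀) = 1 := congrFun (congrArg Subtype.val hb2) i₀
  rw [hath] at hval
  exact hxx2 hval

/-- Condition I: images of bonds eventually land in the image of the level map. -/
theorem cond_I [∀ i, Countable (H i)]
    (Lsurj : Function.Surjective (limMap S T f hcomm))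
    (L1inj : Function.Injective (lim1Map S T f hcomm))
    (L1surj : Function.Surjective (lim1Map S T f hcomm)) (m₀ : ℕ) :
    ∃ (j : ℕ) (h : m₀ ≤ j), ∀ yy : H j, ∃ xx : G m₀, f m₀ xx = T.bond h yy := by
  classical
  set M : ∀ i, Subgroup (H i) := fun i => (f i).range with hMdef
  have hM : ∀ ⦃i j : ℕ⦄ (h : i ≤ j) (x : H j), x ∈ M j → T.bond h x ∈ M i := by
    intro i j h x hx
    obtain ⟨w, hw⟩ := MonoidHom.mem_range.mp hx
    exact MonoidHom.mem_range.mpr ⟨S.bond h w, by rw [map_bond S T f hcomm, hw]⟩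
  have HYP : ∀ h : ∀ i, H i, ∃ (h' x : ∀ i, H i), (∀ i, h' i ∈ M i) ∧
      ∀ i, h' i = (x i)⁻¹ * h i * T.bond (Nat.le_succ i) (x (i + 1)) := by
    intro h
    obtain ⟨aq, haq⟩ := L1surj (Quot.mk _ h)
    obtain ⟨a, rfl⟩ := Quot.exists_rep aq
    rw [show lim1Map S T f hcomm (Quot.mk _ a) = Quot.mk _ (fun i => f i (a i)) from rfl,
      ] at haq
    replace haq := T.lim1_mk_eq.mp haq
    obtain ⟨x, hx⟩ := T.lim1Rel_symm haq
    exact ⟨fun i => f i (a i), x, fun i => MonoidHom.mem_range.mpr ⟨a i, rfl⟩, hx⟩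
  have hstab := step1 T M hM HYP
  choose σ hσle hσstab using hstab
  by_contra hcon
  push_neg at hcon
  set E : ∀ mm, Set (H mm) := fun mm =>
    {u | ∃ m1 ∈ M mm, ∃ z : H (σ mm), u = m1 * T.bond (hσle mm) z} with hE
  have hstepE : ∀ mm (v : H mm), v ∈ E mm → ∃ v', v' ∈ E (mm + 1) ∧
      ∃ mu ∈ M mm, T.bond (Nat.le_succ mm) v' = mu * v := by
    intro mm v hv
    obtain ⟨m1, hm1, z', rfl⟩ := hv
    obtain ⟨m2, hm2, z₂, hz₂⟩ := hσstab mm (max (σ mm) (σ (mm + 1))) (le_max_left _ _) z'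
    refine ⟨T.bond ((hσle (mm + 1)).trans (le_max_right (σ mm) (σ (mm + 1)))) z₂,
      ⟨1, one_mem _, T.bond (le_max_right (σ mm) (σ (mm + 1))) z₂,
        by rw [one_mul, T.bond_bond]⟩,
      (m1 * m2)⁻¹, inv_mem (mul_mem hm1 hm2), ?_⟩
    rw [T.bond_bond, hz₂]
    have hpr : T.bond ((Nat.le_succ mm).trans
        ((hσle (mm + 1)).trans (le_max_right (σ mm) (σ (mm + 1))))) z₂
        = T.bond ((hσle mm).trans (le_max_left (σ mm) (σ (mm + 1)))) z₂ := rfl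
    rw [hpr]
    group
  obtain ⟨yy, hyy⟩ := hcon (σ m₀) (hσle m₀)
  have hξE : T.bond (hσle m₀) yy ∈ E m₀ := ⟨1, one_mem _, yy, by rw [one_mul]⟩
  have hξnotM : T.bond (hσle m₀) yy ∉ M m₀ := by
    intro hmem
    obtain ⟨xx, hxx⟩ := MonoidHom.mem_range.mp hmem
    exact hyy xx hxx
  obtain ⟨hh, μ, hμmem, hthr, mz, hmz, hm₀⟩ := T.threadM M hM (fun mm v => v ∈ E mm)
    hstepE m₀ (T.bond (hσle m₀) yy) hξE
  have hμinv : ∀ j, ∃ aj : G j, f j aj = (μ j)⁻¹ := by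
    intro j
    obtain ⟨w, hw⟩ := MonoidHom.mem_range.mp (hμmem j)
    exact ⟨w⁻¹, by rw [map_inv, hw]⟩
  choose a hafun using hμinv
  have hrel1 : T.lim1Rel (fun i => f i (1 : G i)) (fun i => f i (a i)) := by
    refine ⟨fun j => (hh j)⁻¹, fun i => ?_⟩
    beta_reduce
    rw [hafun i, map_one, inv_inv, map_inv, hthr i]
    group
  have h1 : lim1Map S T f hcomm (Quot.mk _ (fun i => (1 : G i)))
      = lim1Map S T f hcomm (Quot.mk _ a) := by
    show Quot.mk _ _ = Quot.mk _ _
    rw [T.lim1_mk_eq]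
    exact hrel1
  have h2 := L1inj h1
  replace h2 := S.lim1_mk_eq.mp h2
  obtain ⟨x, hx⟩ := h2
  have hμeq : ∀ i, μ i = (T.bond (Nat.le_succ i) (f (i + 1) (x (i + 1))))⁻¹ * f i (x i) := by
    intro i
    have h3 := congrArg (f i) (hx i)
    rw [hafun i, map_mul, map_mul, map_inv, map_one, mul_one, map_bond S T f hcomm] at h3
    rw [← inv_inv (μ i), h3]
    group
  have hthr' : ∀ j, T.bond (Nat.le_succ j) (f (j + 1) (x (j + 1)) * hh (j + 1))
      = f j (x j) * hh j := by
    intro j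
    rw [map_mul, hthr j, hμeq j]
    group
  obtain ⟨bb, hbb⟩ := Lsurj ⟨fun j => f j (x j) * hh j, hthr'⟩
  have hfb : f m₀ (bb.1 m₀) = f m₀ (x m₀) * hh m₀ := congrFun (congrArg Subtype.val hbb) m₀
  obtain ⟨w, hw⟩ := MonoidHom.mem_range.mp hmz
  apply hξnotM
  refine MonoidHom.mem_range.mpr ⟨w⁻¹ * (x m₀)⁻¹ * bb.1 m₀, ?_⟩
  rw [map_mul, map_mul, map_inv, map_inv, hfb, hw, hm₀]
  group

end Backward

end GroupInvSeq


open GroupInvSeq in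
/-- A level map of inverse sequences of countable groups, commuting with the bonding
maps, is a pro-isomorphism if and only if the induced maps on `lim` and `lim¹` are
both bijections. -/
theorem proIso_iff_lim_and_lim1_bijective
    {G H : ℕ → Type} [∀ i, Group (G i)] [∀ i, Group (H i)]
    [∀ i, Countable (G i)] [∀ i, Countable (H i)]
    (S : GroupInvSeq G) (T : GroupInvSeq H) (f : ∀ i, G i →* H i)
    (hcomm : ∀ i (x : G (i + 1)),
      f i (S.bond (Nat.le_succ i) x) = T.bond (Nat.le_succ i) (f (i + 1) x)) :
    (∃ k : ℕ → ℕ, ∃ hk : StrictMono k, ∃ g : ∀ i, H (k (i + 1)) →* G (k i),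
        (∀ i, (g i).comp (f (k (i + 1))) = S.bond (hk.monotone (Nat.le_succ i))) ∧
        (∀ i, (f (k i)).comp (g i) = T.bond (hk.monotone (Nat.le_succ i)))) ↔
      (Function.Bijective (limMap S T f hcomm) ∧
        Function.Bijective (lim1Map S T f hcomm)) := by
  constructor
  · rintro ⟨k, hk, g, hgf, hfg⟩
    exact forward_direction S T f hcomm hk g hgf hfg
  · rintro ⟨⟨Linj, Lsurj⟩, L1inj, L1surj⟩
    classical
    have K := cond_K S T f hcomm Linj Lsurj L1inj
    have I := cond_I S T f hcomm Lsurj L1inj L1surj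
    have hnext : ∀ κ : ℕ, ∃ κ', κ < κ' ∧ ∃ (m : ℕ) (h1 : κ ≤ m) (h2 : m ≤ κ'),
        (∀ x : G m, f m x = 1 → S.bond h1 x = 1) ∧
        (∀ yy : H κ', ∃ xx : G m, f m xx = T.bond h2 yy) := by
      intro κ
      obtain ⟨m, h1, hker⟩ := K κ
      obtain ⟨j, h2, him⟩ := I m
      refine ⟨max j (κ + 1), by omega, m, h1, by omega, hker, ?_⟩
      intro yy
      obtain ⟨xx, hxx⟩ := him (T.bond (le_max_left j (κ + 1)) yy)
      exact ⟨xx, by rw [hxx, T.bond_bond]⟩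
    let k : ℕ → ℕ := fun n => Nat.rec 0 (fun _ κ => (hnext κ).choose) n
    have hkspec : ∀ i, k i < k (i + 1) ∧ ∃ (m : ℕ) (h1 : k i ≤ m) (h2 : m ≤ k (i + 1)),
        (∀ x : G m, f m x = 1 → S.bond h1 x = 1) ∧
        (∀ yy : H (k (i + 1)), ∃ xx : G m, f m xx = T.bond h2 yy) :=
      fun i => (hnext (k i)).choose_spec
    choose hklt m h1 h2 hker him using hkspec
    have hk : StrictMono k := strictMono_nat_of_lt_succ hklt
    choose xx hxx using him
    have key : ∀ i (u v : G (m i)), f (m i) u = f (m i) v →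
        S.bond (h1 i) u = S.bond (h1 i) v := by
      intro i u v he
      have h4 : f (m i) (u * v⁻¹) = 1 := by rw [map_mul, map_inv, he, mul_inv_cancel]
      have h5 := hker i _ h4
      rw [map_mul, map_inv] at h5
      exact mul_inv_eq_one.mp h5
    refine ⟨k, hk, fun i => MonoidHom.mk' (fun y => S.bond (h1 i) (xx i y)) (by
        intro y1 y2
        rw [← map_mul]
        apply key i
        rw [hxx i (y1 * y2), map_mul, map_mul, hxx i y1, hxx i y2]),
      fun i => ?_, fun i => ?_⟩
    · apply MonoidHom.ext
      intro xv
      show S.bond (h1 i) (xx i (f (k (i + 1)) xv)) = S.bond (hk.monotone (Nat.le_succ i)) xv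
      have e : f (m i) (xx i (f (k (i + 1)) xv)) = f (m i) (S.bond (h2 i) xv) := by
        rw [hxx, map_bond S T f hcomm]
      have h6 := key i _ _ e
      rw [S.bond_bond] at h6
      exact h6
    · apply MonoidHom.ext
      intro y
      show f (k i) (S.bond (h1 i) (xx i y)) = T.bond (hk.monotone (Nat.le_succ i)) y
      rw [map_bond S T f hcomm, hxx, T.bond_bond]
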